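/- Let n ≥ 2 be an integer, b ∈ ℂ, and let w ∈ ℂ be a periodic point of the map g_b, say of period h ≥ 1, with multiplier μ = ∏_{j=0}^{h-1} (g_b^{∘j}(w))^{n-1}. Then the four subrings ℤ[μ], ℤ[w], ℤ[b], and ℤ[b^{n-1}] of ℂ all have the same integral closure in ℂ. -/

import Mathlib

/-- The integral closure of `ℤ[u]` in `ℂ`: the set of complex numbers satisfying a
monic polynomial equation with coefficients in the subring `ℤ[u]` of `ℂ`. -/
noncomputable def intClosure (u : ℂ) : Set ℂ :=
  {x : ℂ | IsIntegral ↥(Algebra.adjoin ℤ ({u} : Set ℂ)) x}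

open Polynomial


def eSeq (n : ℕ) : ℕ → ℕ
  | 0 => 0
  | k + 1 => n * eSeq n k + 1

noncomputable def rSeq (n : ℕ) {A : Type*} [CommRing A] (β : Polynomial A) : ℕ → Polynomial A
  | 0 => Polynomial.X
  | k + 1 => rSeq n β k ^ n + Polynomial.C ((n : A) ^ (n * eSeq n k)) * β

lemma rSeq_eval {n : ℕ} (hn : 2 ≤ n) {A : Type*} [CommRing A] [Algebra A ℂ]
    (β : Polynomial A) {b z : ℂ} (hβ : Polynomial.aeval z β = b) {g : ℂ → ℂ}
    (hg : g = fun t : ℂ => (t ^ n + b) / n) (k : ℕ) :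
    Polynomial.aeval z (rSeq n β k) = (n : ℂ) ^ (eSeq n k) * g^[k] z := by
  have hn0 : (n : ℂ) ≠ 0 := by
    have : n ≠ 0 := by omega
    exact_mod_cast this
  induction k with
  | zero => simp [rSeq, eSeq]
  | succ k ih =>
      have hgk : (n : ℂ) * g^[k + 1] z = (g^[k] z) ^ n + b := by
        rw [Function.iterate_succ_apply', hg]
        exact mul_div_cancel₀ _ hn0
      have hmap : (algebraMap A ℂ) ((n : A) ^ (n * eSeq n k)) = (n : ℂ) ^ (n * eSeq n k) := by
        rw [map_pow, map_natCast]
      simp only [rSeq, map_add, map_mul, map_pow, map_natCast, ih, Polynomial.aeval_C, hβ]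
      rw [eSeq, mul_pow, ← pow_mul, mul_comm (eSeq n k) n, pow_succ, ← mul_add, ← hgk]
      ring

lemma rSeq_monic {n : ℕ} (hn : 2 ≤ n) {A : Type*} [CommRing A] [Nontrivial A]
    {β : Polynomial A} (hβ : β.natDegree ≤ 1) (k : ℕ) :
    (rSeq n β k).Monic ∧ (rSeq n β k).natDegree = n ^ k := by
  induction k with
  | zero => exact ⟨Polynomial.monic_X, Polynomial.natDegree_X⟩
  | succ k ih =>
      obtain ⟨hm, hd⟩ := ih
      have hmp : ((rSeq n β k) ^ n).Monic := hm.pow n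
      have hdp : ((rSeq n β k) ^ n).natDegree = n ^ (k + 1) := by
        rw [hm.natDegree_pow, hd]; ring
      have hq : (Polynomial.C ((n : A) ^ (n * eSeq n k)) * β).degree <
          ((rSeq n β k) ^ n).degree := by
        have h1 : (Polynomial.C ((n : A) ^ (n * eSeq n k)) * β).natDegree ≤ 1 :=
          le_trans (Polynomial.natDegree_C_mul_le _ _) hβ
        have h2 : (1 : ℕ) < n ^ (k + 1) := by
          calc (1:ℕ) < 2 := one_lt_two
          _ ≤ n := hn
          _ ≤ n ^ (k+1) := Nat.le_self_pow (by omega) n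
        calc (Polynomial.C ((n : A) ^ (n * eSeq n k)) * β).degree
            ≤ ((Polynomial.C ((n : A) ^ (n * eSeq n k)) * β).natDegree : ℕ) :=
              Polynomial.degree_le_natDegree
          _ ≤ (1 : ℕ) := by exact_mod_cast h1
          _ < (((rSeq n β k) ^ n).natDegree : ℕ) := by
              rw [hdp]; exact_mod_cast h2
          _ = ((rSeq n β k) ^ n).degree := (Polynomial.degree_eq_natDegree hmp.ne_zero).symm
      constructor
      · exact hmp.add_of_left hq
      · show ((rSeq n β k) ^ n + _).natDegree = n ^ (k+1)
        rw [Polynomial.natDegree_add_eq_left_of_degree_lt hq, hdp]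

/-- Transfer: if `u` is integral over `R ⊆ ℂ`, then anything integral over `ℤ[u]`
is integral over `R`. -/
lemma isIntegral_adjoin_trans' {R : Type*} [CommRing R] [Algebra R ℂ] {u x : ℂ}
    (hu : IsIntegral R u)
    (hx : IsIntegral (Algebra.adjoin ℤ ({u} : Set ℂ)) x) :
    IsIntegral R x := by
  have hmem : ∀ a : (Algebra.adjoin ℤ ({u} : Set ℂ)),
      (a : ℂ) ∈ (integralClosure R ℂ).toSubring := by
    rintro ⟨a, ha⟩
    have hcl : Subring.closure ({u} : Set ℂ) ≤ (integralClosure R ℂ).toSubring :=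
      Subring.closure_le.mpr (by simpa [mem_integralClosure_iff] using hu)
    apply hcl
    rw [Algebra.adjoin_int] at ha
    exact ha
  set f := (algebraMap (Algebra.adjoin ℤ ({u} : Set ℂ)) ℂ).codRestrict
    (integralClosure R ℂ).toSubring hmem with hf
  have hxC : IsIntegral (integralClosure R ℂ) x := by
    obtain ⟨p, hp, he⟩ := hx
    refine ⟨p.map f, hp.map f, ?_⟩
    rw [Polynomial.eval₂_map]
    have hcomp : (algebraMap (integralClosure R ℂ) ℂ).comp f
        = algebraMap (Algebra.adjoin ℤ ({u} : Set ℂ)) ℂ := RingHom.ext fun a => rfl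
    rw [hcomp]
    exact he
  exact isIntegral_trans x hxC

lemma isIntegral_adjoin_trans {u v x : ℂ}
    (huv : IsIntegral (Algebra.adjoin ℤ ({v} : Set ℂ)) u)
    (hx : IsIntegral (Algebra.adjoin ℤ ({u} : Set ℂ)) x) :
    IsIntegral (Algebra.adjoin ℤ ({v} : Set ℂ)) x :=
  isIntegral_adjoin_trans' huv hx



lemma intClosure_eq {u v : ℂ}
    (huv : IsIntegral (Algebra.adjoin ℤ ({v} : Set ℂ)) u)
    (hvu : IsIntegral (Algebra.adjoin ℤ ({u} : Set ℂ)) v) :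
    intClosure u = intClosure v :=
  le_antisymm (fun _ hx => isIntegral_adjoin_trans huv hx)
    (fun _ hx => isIntegral_adjoin_trans hvu hx)

/-- If `x` is not integral over a subring of a field, there is a valuation subring
containing the subring but not `x`. -/
lemma exists_valuationSubring_not_mem {K : Type*} [Field K] (A : Subring K) (x : K)
    (hx : ¬ IsIntegral A x) :
    ∃ V : ValuationSubring K, A ≤ V.toSubring ∧ x ∉ V := by
  have hx0 : x ≠ 0 := by rintro rfl; exact hx isIntegral_zero
  set y := x⁻¹ with hy
  have hy0 : y ≠ 0 := inv_ne_zero hx0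
  have hyx : y * x = 1 := inv_mul_cancel₀ hx0
  set S := Algebra.adjoin A ({y} : Set K) with hS
  have hySr : y ∈ S.toSubring := Algebra.self_mem_adjoin_singleton _ _
  have hI : Ideal.span {(⟨y, hySr⟩ : S.toSubring)} ≠ ⊤ := by
    intro htop
    have h1 : (1 : S.toSubring) ∈ Ideal.span {(⟨y, hySr⟩ : S.toSubring)} :=
      htop ▸ Submodule.mem_top
    obtain ⟨c, hc⟩ := Ideal.mem_span_singleton'.mp h1
    have hcS : (c : K) ∈ (Polynomial.aeval (R := ↥A) y).range := by
      rw [← Algebra.adjoin_singleton_eq_range_aeval]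
      exact c.2
    obtain ⟨p, hp⟩ := hcS
    have hcy : (c : K) * y = 1 := congrArg Subtype.val hc
    set r : Polynomial A := 1 - Polynomial.X * p with hr
    have hr0 : r.coeff 0 = 1 := by
      simp [hr, Polynomial.coeff_one, Polynomial.mul_coeff_zero]
    have hrev : aeval y r = 0 := by
      have hp' : Polynomial.aeval y p = (c : K) := hp
      rw [hr, map_sub, map_one, map_mul, Polynomial.aeval_X, hp']
      rw [mul_comm, hcy, sub_self]
    haveI : Invertible y := (isUnit_iff_ne_zero.mpr hy0).invertible
    have hinv : ⅟ y = x := invOf_eq_right_inv hyx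
    have hroot : aeval x r.reverse = 0 := by
      rw [← hinv]
      rw [Polynomial.aeval_def] at hrev ⊢
      exact (Polynomial.eval₂_reverse_eq_zero_iff (algebraMap A K) y r).mpr hrev
    have hmono : r.reverse.Monic := by
      have htr : r.natTrailingDegree = 0 :=
        Polynomial.natTrailingDegree_eq_zero.mpr (Or.inr (hr0 ▸ one_ne_zero))
      rw [Polynomial.Monic.def, Polynomial.reverse_leadingCoeff, Polynomial.trailingCoeff,
        htr, hr0]
    exact hx ⟨r.reverse, hmono, by rw [← Polynomial.aeval_def]; exact hroot⟩
  obtain ⟨m, hm, hJm⟩ := Ideal.exists_le_maximal _ hI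
  haveI : m.IsPrime := hm.isPrime
  obtain ⟨V, hV⟩ := (LocalSubring.ofPrime S.toSubring m).exists_le_valuationSubring
  have hym : (⟨y, hySr⟩ : S.toSubring) ∈ m :=
    hJm (Ideal.subset_span (Set.mem_singleton _))
  refine ⟨V, ?_, ?_⟩
  · refine le_trans ?_ (le_trans (LocalSubring.le_ofPrime S.toSubring m) hV.1)
    intro a ha
    exact Subalgebra.algebraMap_mem S ⟨a, ha⟩
  · intro hxV
    have hyL : ¬ IsUnit (algebraMap S.toSubring
        (LocalSubring.ofPrime S.toSubring m).toSubring ⟨y, hySr⟩) := by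
      rw [IsLocalization.AtPrime.isUnit_to_map_iff
        (LocalSubring.ofPrime S.toSubring m).toSubring m]
      exact fun hc => hc hym
    apply hyL
    have hlocal := hV.2
    apply hlocal.1
    have heq : (Subring.inclusion hV.1)
        (algebraMap S.toSubring (LocalSubring.ofPrime S.toSubring m).toSubring ⟨y, hySr⟩)
        = ⟨y, hV.1 (LocalSubring.le_ofPrime S.toSubring m hySr)⟩ := rfl
    rw [heq]
    exact isUnit_iff_exists_inv.mpr ⟨⟨x, hxV⟩, Subtype.ext hyx⟩


/-- If `g^[k] z` is expressible as a degree-≤1 polynomial in `z` over `A`,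
then `z` is integral over `A`. -/
lemma isIntegral_of_iterate {n : ℕ} (hn : 2 ≤ n) {b : ℂ} {g : ℂ → ℂ}
    (hg : g = fun t : ℂ => (t ^ n + b) / n) (A : Subalgebra ℤ ℂ)
    (β γ : Polynomial A) (hβ : β.natDegree ≤ 1) (hγ : γ.natDegree ≤ 1)
    {z : ℂ} (hzβ : Polynomial.aeval z β = b) {k : ℕ} (hk : 1 ≤ k)
    (hzγ : g^[k] z = Polynomial.aeval z γ) : IsIntegral A z := by
  obtain ⟨hm, hd⟩ := rSeq_monic hn hβ k
  set q : Polynomial A := Polynomial.C ((n : A) ^ (eSeq n k)) * γ with hq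
  have hqd : q.degree < (rSeq n β k).degree := by
    have h1 : q.natDegree ≤ 1 := le_trans (Polynomial.natDegree_C_mul_le _ _) hγ
    have h2 : (1 : ℕ) < n ^ k := by
      calc (1:ℕ) < 2 := one_lt_two
        _ ≤ n := hn
        _ ≤ n ^ k := Nat.le_self_pow (by omega) n
    calc q.degree ≤ (q.natDegree : ℕ) := Polynomial.degree_le_natDegree
      _ ≤ (1 : ℕ) := by exact_mod_cast h1
      _ < ((n ^ k : ℕ) : WithBot ℕ) := by exact_mod_cast h2
      _ = (rSeq n β k).degree := by
          rw [Polynomial.degree_eq_natDegree hm.ne_zero, hd]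
  refine ⟨rSeq n β k - q, hm.sub_of_left hqd, ?_⟩
  have heval : Polynomial.aeval z (rSeq n β k - q) = 0 := by
    rw [map_sub, rSeq_eval hn β hzβ hg k, hzγ, hq, map_mul, Polynomial.aeval_C,
      map_pow, map_natCast]
    ring
  rw [← Polynomial.aeval_def]
  exact heval


lemma isIntegral_adjoin_mu_b {n : ℕ} (hn : 2 ≤ n) {b : ℂ} {g : ℂ → ℂ}
    (hg : g = fun t : ℂ => (t ^ n + b) / n) {w : ℂ} {h : ℕ} (hh : 1 ≤ h)
    (hper : g^[h] w = w) {μ : ℂ}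
    (hμ : μ = ∏ j ∈ Finset.range h, (g^[j] w) ^ (n - 1)) :
    IsIntegral (Algebra.adjoin ℤ ({μ} : Set ℂ)) b := by
  by_contra hb
  have hb' : ¬ IsIntegral ((Algebra.adjoin ℤ ({μ} : Set ℂ)).toSubring) b := fun h' => hb h'
  obtain ⟨V, hAV, hbV⟩ := exists_valuationSubring_not_mem _ b hb'
  set v := V.valuation with hv
  set X : ℕ → _ := fun j => v (g^[j] w) with hX
  have hn0 : (n : ℂ) ≠ 0 := by
    have : n ≠ 0 := by omega
    exact_mod_cast this
  have hn1 : n - 1 ≠ 0 := by omega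
  -- basic valuation facts
  have hμV : μ ∈ V := hAV (Algebra.subset_adjoin (Set.mem_singleton μ))
  have hvμ : v μ ≤ 1 := (V.valuation_le_one_iff μ).mpr hμV
  have hvn : v (n : ℂ) ≤ 1 := (V.valuation_le_one_iff _).mpr (by
      exact_mod_cast natCast_mem V.toSubring n)
  have hB : 1 < v b := by
    by_contra hc
    exact hbV ((V.valuation_le_one_iff b).mp (not_lt.mp hc))
  -- the recurrence in valuation form
  have hrel : ∀ j : ℕ, v (n : ℂ) * X (j + 1) = v ((g^[j] w) ^ n + b) := by
    intro j
    have : (n : ℂ) * g^[j + 1] w = (g^[j] w) ^ n + b := by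
      rw [Function.iterate_succ_apply', hg]
      exact mul_div_cancel₀ _ hn0
    rw [hX, ← map_mul, this]
  have hperiodic : ∀ j : ℕ, X (j + h) = X j := by
    intro j
    simp only [hX, Function.iterate_add_apply, hper]
  -- auxiliary: 1 < a → a < a ^ n
  have hself : ∀ a : V.ValueGroup, 1 < a → a < a ^ n := by
    intro a ha
    have ha0 : a ≠ 0 := ne_zero_of_lt ha
    have h1 : (1 : V.ValueGroup) < a ^ (n - 1) := one_lt_pow' ha hn1
    calc a = a * 1 := (mul_one a).symm
      _ < a * a ^ (n - 1) := mul_lt_mul_of_pos_left h1 (zero_lt_iff.mpr ha0)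
      _ = a ^ n := by rw [← pow_succ']; congr 1; omega
  -- step lemma
  have sub1 : ∀ j : ℕ, v b < X j ^ n → X j < X (j + 1) ∧ v b < X (j + 1) ^ n := by
    intro j hj
    have hne : v ((g^[j] w) ^ n) ≠ v b := by rw [map_pow]; exact (ne_of_gt hj)
    have hmax : v ((g^[j] w) ^ n + b) = X j ^ n := by
      rw [Valuation.map_add_of_distinct_val v hne, map_pow]
      exact max_eq_left (le_of_lt hj)
    have heq : v (n : ℂ) * X (j + 1) = X j ^ n := by rw [hrel j, hmax]
    have hle : X j ^ n ≤ X (j + 1) := by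
      calc X j ^ n = v (n : ℂ) * X (j + 1) := heq.symm
        _ ≤ 1 * X (j + 1) := mul_le_mul_left hvn _
        _ = X (j + 1) := one_mul _
    have hX1 : 1 < X j := by
      by_contra hc
      have : X j ^ n ≤ 1 := pow_le_one' (not_lt.mp hc) n
      exact absurd (lt_trans hB hj) (not_lt.mpr this)
    have h2 : X j < X (j + 1) := lt_of_lt_of_le (hself _ hX1) hle
    have h3 : 1 < X (j + 1) := lt_trans hX1 h2
    refine ⟨h2, ?_⟩
    calc v b < X j ^ n := hj
      _ ≤ X (j + 1) := hle
      _ < X (j + 1) ^ n := hself _ h3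
  -- Claim A
  have claimA : ∀ j : ℕ, X j ^ n ≤ v b := by
    by_contra hc
    push_neg at hc
    obtain ⟨j0, hj0⟩ := hc
    have key : ∀ m : ℕ, X (j0 + m) < X (j0 + m + 1) ∧ v b < X (j0 + m + 1) ^ n := by
      intro m
      induction m with
      | zero => exact sub1 j0 hj0
      | succ m ih => exact sub1 (j0 + m + 1) ih.2
    have mono : ∀ m : ℕ, X j0 < X (j0 + m + 1) := by
      intro m
      induction m with
      | zero => exact (key 0).1
      | succ m ih => exact lt_trans ih (key (m + 1)).1
    have h1 : X j0 < X (j0 + h) := by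
      obtain ⟨m, rfl⟩ : ∃ m, h = m + 1 := ⟨h - 1, by omega⟩
      exact mono m
    rw [hperiodic j0] at h1
    exact lt_irrefl _ h1
  -- Claim B
  have claimB : ∀ j : ℕ, X j ^ n = v b := by
    intro j
    rcases lt_or_eq_of_le (claimA j) with hlt | heq
    · exfalso
      have hne : v ((g^[j] w) ^ n) ≠ v b := by rw [map_pow]; exact (ne_of_lt hlt)
      have hmax : v ((g^[j] w) ^ n + b) = v b := by
        rw [Valuation.map_add_of_distinct_val v hne, map_pow]
        exact max_eq_right (le_of_lt hlt)
      have heq2 : v (n : ℂ) * X (j + 1) = v b := by rw [hrel j, hmax]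
      have hle : v b ≤ X (j + 1) := by
        calc v b = v (n : ℂ) * X (j + 1) := heq2.symm
          _ ≤ 1 * X (j + 1) := mul_le_mul_left hvn _
          _ = X (j + 1) := one_mul _
      have h1 : 1 < X (j + 1) := lt_of_lt_of_le hB hle
      have : v b < X (j + 1) ^ n := lt_of_le_of_lt hle (hself _ h1)
      exact absurd this (not_lt.mpr (claimA (j + 1)))
    · exact heq
  -- final contradiction
  have hprod : v μ ^ n = ((v b) ^ (n - 1)) ^ h := by
    rw [hμ, map_prod]
    rw [← Finset.prod_pow]
    rw [Finset.prod_congr rfl (fun j _ => ?_), Finset.prod_const, Finset.card_range]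
    rw [map_pow, ← pow_mul, mul_comm (n-1) n, pow_mul, claimB j]
  have h1 : v μ ^ n ≤ 1 := pow_le_one' hvμ n
  have h2 : 1 < ((v b) ^ (n - 1)) ^ h := one_lt_pow' (one_lt_pow' hB hn1) (by omega)
  rw [hprod] at h1
  exact absurd h2 (not_lt.mpr h1)

/-- elements of A are integral over A -/
lemma isIntegral_of_mem (A : Subalgebra ℤ ℂ) {x : ℂ} (hx : x ∈ A) : IsIntegral A x := by
  refine ⟨Polynomial.X - Polynomial.C ⟨x, hx⟩, Polynomial.monic_X_sub_C _, ?_⟩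
  rw [← Polynomial.aeval_def, map_sub, Polynomial.aeval_X, Polynomial.aeval_C]
  exact sub_eq_zero_of_eq rfl

section main
variable {n : ℕ} (hn : 2 ≤ n) {b : ℂ} {g : ℂ → ℂ}
    (hg : g = fun t : ℂ => (t ^ n + b) / n) {w : ℂ} {h : ℕ} (hh : 1 ≤ h)
    (hper : g^[h] w = w)

include hn hg hh hper

/-- every orbit point is integral over ℤ[b] -/
lemma orbit_isIntegral (j : ℕ) :
    IsIntegral (Algebra.adjoin ℤ ({b} : Set ℂ)) (g^[j] w) := by
  have hbmem : b ∈ Algebra.adjoin ℤ ({b} : Set ℂ) :=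
    Algebra.subset_adjoin (Set.mem_singleton b)
  refine isIntegral_of_iterate hn hg _ (Polynomial.C ⟨b, hbmem⟩) Polynomial.X
    (by simp) (by simp) ?_ hh ?_
  · rw [Polynomial.aeval_C]; rfl
  · rw [Polynomial.aeval_X, ← Function.iterate_add_apply, add_comm,
      Function.iterate_add_apply, hper]

/-- b is integral over ℤ[w] -/
lemma b_isIntegral_w : IsIntegral (Algebra.adjoin ℤ ({w} : Set ℂ)) b := by
  have hn0 : (n : ℂ) ≠ 0 := by
    have : n ≠ 0 := by omega
    exact_mod_cast this
  have hwmem : w ∈ Algebra.adjoin ℤ ({w} : Set ℂ) :=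
    Algebra.subset_adjoin (Set.mem_singleton w)
  have hgw : (n : ℂ) * g w = w ^ n + b := by
    rw [hg]; exact mul_div_cancel₀ _ hn0
  rcases eq_or_lt_of_le hh with h1 | h2
  · -- h = 1 : g w = w and b = n*w - w^n ∈ ℤ[w]
    have hgww : g w = w := by
      have := h1 ▸ hper
      simpa using this
    apply isIntegral_of_mem
    have hb : b = (n : ℂ) * w - w ^ n := by rw [hgww] at hgw; linear_combination -hgw
    rw [hb]
    exact Subalgebra.sub_mem _
      (Subalgebra.mul_mem _ (Subalgebra.natCast_mem _ n) hwmem)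
      (Subalgebra.pow_mem _ hwmem n)
  · -- h ≥ 2 : first g w is integral over ℤ[w], then b = n * g w - w ^ n
    set Aw := Algebra.adjoin ℤ ({w} : Set ℂ) with hAw
    set w' : Aw := ⟨w, hwmem⟩ with hw'
    have hz : IsIntegral Aw (g w) := by
      refine isIntegral_of_iterate hn hg Aw
        (Polynomial.C (n : Aw) * Polynomial.X - Polynomial.C (w' ^ n))
        (Polynomial.C w') ?_ (by simp) ?_ (k := h - 1) (by omega) ?_
      · refine le_trans (Polynomial.natDegree_sub_le _ _) ?_
        simp only [Polynomial.natDegree_C, max_le_iff]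
        constructor
        · exact le_trans (Polynomial.natDegree_C_mul_le _ _) (le_of_eq Polynomial.natDegree_X)
        · omega
      · rw [map_sub, map_mul, Polynomial.aeval_C, Polynomial.aeval_C, Polynomial.aeval_X]
        have h1 : (algebraMap Aw ℂ) ((n : Aw)) = (n : ℂ) := map_natCast _ n
        have h2 : (algebraMap Aw ℂ) (w' ^ n) = w ^ n := by rw [map_pow]; rfl
        rw [h1, h2, hgw]; ring
      · rw [Polynomial.aeval_C]
        have heq : g^[h - 1] (g w) = g^[h] w := by
          rw [← Function.iterate_succ_apply]
          congr 1
          omega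
        rw [heq, hper]; rfl
    have hb : b = (n : ℂ) * g w - w ^ n := by linear_combination -hgw
    rw [hb]
    have hnInt : IsIntegral Aw ((n : ℂ)) :=
      isIntegral_of_mem _ (Subalgebra.natCast_mem _ n)
    have hwInt : IsIntegral Aw (w ^ n) :=
      isIntegral_of_mem _ (Subalgebra.pow_mem _ hwmem n)
    exact (hnInt.mul hz).sub hwInt

/-- μ is integral over ℤ[b] -/
lemma mu_isIntegral_b {μ : ℂ}
    (hμ : μ = ∏ j ∈ Finset.range h, (g^[j] w) ^ (n - 1)) :
    IsIntegral (Algebra.adjoin ℤ ({b} : Set ℂ)) μ := by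
  have : μ ∈ integralClosure (Algebra.adjoin ℤ ({b} : Set ℂ)) ℂ := by
    rw [hμ]
    refine Subalgebra.prod_mem _ fun j _ => Subalgebra.pow_mem _ ?_ _
    exact orbit_isIntegral hn hg hh hper j
  exact this

end main


theorem stmt0 (n : ℕ) (hn : 2 ≤ n) (b : ℂ) (g : ℂ → ℂ)
    (hg : g = fun z : ℂ => (z ^ n + b) / n)
    (w : ℂ) (h : ℕ) (hh : 1 ≤ h) (hper : g^[h] w = w)
    (μ : ℂ) (hμ : μ = ∏ j ∈ Finset.range h, (g^[j] w) ^ (n - 1)) :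
    intClosure μ = intClosure w ∧ intClosure w = intClosure b ∧
      intClosure b = intClosure (b ^ (n - 1)) := by
  have wb : IsIntegral (Algebra.adjoin ℤ ({b} : Set ℂ)) w := by
    have := orbit_isIntegral hn hg hh hper 0
    simpa using this
  have bw : IsIntegral (Algebra.adjoin ℤ ({w} : Set ℂ)) b := b_isIntegral_w hn hg hh hper
  have μb : IsIntegral (Algebra.adjoin ℤ ({b} : Set ℂ)) μ := mu_isIntegral_b hn hg hh hper hμ
  have bμ : IsIntegral (Algebra.adjoin ℤ ({μ} : Set ℂ)) b :=
    isIntegral_adjoin_mu_b hn hg hh hper hμ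
  have hbpmem : b ^ (n - 1) ∈ Algebra.adjoin ℤ ({b ^ (n - 1)} : Set ℂ) :=
    Algebra.subset_adjoin (Set.mem_singleton _)
  have bp : IsIntegral (Algebra.adjoin ℤ ({b ^ (n - 1)} : Set ℂ)) b := by
    refine ⟨Polynomial.X ^ (n - 1) - Polynomial.C ⟨b ^ (n - 1), hbpmem⟩,
      Polynomial.monic_X_pow_sub_C _ (by omega), ?_⟩
    rw [← Polynomial.aeval_def, map_sub, map_pow, Polynomial.aeval_X, Polynomial.aeval_C]
    exact sub_eq_zero_of_eq rfl
  have pb : IsIntegral (Algebra.adjoin ℤ ({b} : Set ℂ)) (b ^ (n - 1)) :=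
    isIntegral_of_mem _ (Subalgebra.pow_mem _ (Algebra.subset_adjoin (Set.mem_singleton b)) _)
  refine ⟨?_, ?_, ?_⟩
  · exact intClosure_eq (isIntegral_adjoin_trans bw μb) (isIntegral_adjoin_trans bμ wb)
  · exact intClosure_eq wb bw
  · exact intClosure_eq bp pb
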